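/- The logarithmic derivative of Φ, i.e. the function x ↦ Φ'(x)/Φ(x), is strictly monotone increasing on (-∞, 1). -/

import Mathlib

/-- The complete elliptic integral of the first kind,
`K(m) = ∫₀¹ dζ / √((1-ζ²)(1-mζ²))`, defined for `m < 1`. -/
noncomputable def ellipticK (m : ℝ) : ℝ :=
  ∫ ζ in (0:ℝ)..1, 1 / Real.sqrt ((1 - ζ ^ 2) * (1 - m * ζ ^ 2))

/-- `Φ(x) = K((1-√(1-x))/(1+√(1-x))) / √(1+√(1-x))`, defined for `x < 1`. -/
noncomputable def Phi (x : ℝ) : ℝ :=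
  ellipticK ((1 - Real.sqrt (1 - x)) / (1 + Real.sqrt (1 - x))) /
    Real.sqrt (1 + Real.sqrt (1 - x))

namespace PhiAux

open MeasureTheory Set intervalIntegral

/-- The inner expression. -/
noncomputable def inr (x ζ : ℝ) : ℝ :=
  (1 - ζ ^ 2) * ((1 - ζ ^ 2) + (1 + ζ ^ 2) * Real.sqrt (1 - x))

/-- The integrand. -/
noncomputable def gg (x ζ : ℝ) : ℝ := 1 / Real.sqrt (inr x ζ)

lemma sqrt1x_pos {x : ℝ} (hx : x < 1) : 0 < Real.sqrt (1 - x) :=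
  Real.sqrt_pos.2 (by linarith)

lemma inr_pos {x ζ : ℝ} (hx : x < 1) (hζ : ζ ∈ Set.Ioo (0:ℝ) 1) : 0 < inr x ζ := by
  have ht := sqrt1x_pos hx
  have h1 : 0 < 1 - ζ ^ 2 := by nlinarith [hζ.1, hζ.2]
  have h2 : 0 < (1 + ζ ^ 2) * Real.sqrt (1 - x) := by positivity
  unfold inr; nlinarith

lemma gg_nonneg (x ζ : ℝ) : 0 ≤ gg x ζ := by
  unfold gg; positivity

lemma gg_pos {x ζ : ℝ} (hx : x < 1) (hζ : ζ ∈ Set.Ioo (0:ℝ) 1) : 0 < gg x ζ := by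
  unfold gg
  exact div_pos one_pos (Real.sqrt_pos.2 (inr_pos hx hζ))

lemma gg_meas (x : ℝ) : Measurable (fun ζ => gg x ζ) := by
  have hc : Continuous fun ζ : ℝ => Real.sqrt (inr x ζ) := by
    unfold inr; fun_prop
  show Measurable fun ζ => 1 / Real.sqrt (inr x ζ)
  simp only [one_div]
  exact hc.measurable.inv

lemma intInt_of_bound {f : ℝ → ℝ} (hm : Measurable f) {C : ℝ}
    (hb : ∀ ζ ∈ Set.Ioo (0:ℝ) 1, |f ζ| ≤ C / Real.sqrt (1 - ζ)) :
    IntervalIntegrable f MeasureTheory.volume 0 1 := by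
  have h0 : IntervalIntegrable (fun u : ℝ => u ^ (-(1/2) : ℝ)) volume 0 1 :=
    intervalIntegral.intervalIntegrable_rpow' (by norm_num)
  have h1 : IntervalIntegrable (fun u : ℝ => (1 - u) ^ (-(1/2) : ℝ)) volume 0 1 := by
    have := (h0.comp_sub_left 1).symm
    simpa using this
  have base : IntervalIntegrable (fun ζ : ℝ => C * (1 - ζ) ^ (-(1/2) : ℝ)) volume 0 1 :=
    h1.const_mul C
  rw [intervalIntegrable_iff_integrableOn_Ioc_of_le zero_le_one] at base ⊢
  rw [integrableOn_Ioc_iff_integrableOn_Ioo] at base ⊢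
  refine MeasureTheory.Integrable.mono' base (hm.aestronglyMeasurable.restrict) ?_
  refine (MeasureTheory.ae_restrict_iff' measurableSet_Ioo).2 (Filter.Eventually.of_forall ?_)
  intro ζ hζ
  have h1ζ : (0:ℝ) < 1 - ζ := by linarith [hζ.2]
  calc ‖f ζ‖ = |f ζ| := rfl
    _ ≤ C / Real.sqrt (1 - ζ) := hb ζ hζ
    _ = C * (1 - ζ) ^ (-(1/2) : ℝ) := by
        rw [Real.rpow_neg h1ζ.le, Real.sqrt_eq_rpow, div_eq_mul_inv]

lemma gg_le {x ζ : ℝ} (hx : x < 1) (hζ : ζ ∈ Set.Ioo (0:ℝ) 1) :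
    gg x ζ ≤ (1 / Real.sqrt (Real.sqrt (1 - x))) / Real.sqrt (1 - ζ) := by
  set t := Real.sqrt (1 - x) with hts
  have ht : 0 < t := sqrt1x_pos hx
  have h1ζ : (0:ℝ) < 1 - ζ := by linarith [hζ.2]
  have key : (1 - ζ) * t ≤ inr x ζ := by
    unfold inr
    rw [← hts]
    have e1 : 1 - ζ ≤ 1 - ζ ^ 2 := by nlinarith [hζ.1, hζ.2]
    have e2 : t ≤ 1 - ζ ^ 2 + (1 + ζ ^ 2) * t := by nlinarith [hζ.1, hζ.2, ht]
    exact mul_le_mul e1 e2 ht.le (by nlinarith [hζ.1, hζ.2])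
  have h2 : Real.sqrt ((1 - ζ) * t) ≤ Real.sqrt (inr x ζ) := Real.sqrt_le_sqrt key
  have h3 : 0 < Real.sqrt ((1 - ζ) * t) := Real.sqrt_pos.2 (by positivity)
  calc gg x ζ ≤ 1 / Real.sqrt ((1 - ζ) * t) := by
        unfold gg; exact one_div_le_one_div_of_le h3 h2
    _ = (1 / Real.sqrt t) / Real.sqrt (1 - ζ) := by
        rw [Real.sqrt_mul h1ζ.le, one_div, mul_inv, div_eq_mul_inv, one_div, mul_comm]

lemma intInt_gg {x : ℝ} (hx : x < 1) :
    IntervalIntegrable (fun ζ => gg x ζ) MeasureTheory.volume 0 1 := by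
  refine intInt_of_bound (gg_meas x) (C := 1 / Real.sqrt (Real.sqrt (1 - x))) ?_
  intro ζ hζ
  rw [abs_of_nonneg (gg_nonneg x ζ)]
  exact gg_le hx hζ

end PhiAux

namespace PhiAux
open MeasureTheory Set intervalIntegral

lemma Phi_eq {x : ℝ} (hx : x < 1) : Phi x = ∫ ζ in (0:ℝ)..1, gg x ζ := by
  set t := Real.sqrt (1 - x) with hts
  have ht : 0 < t := sqrt1x_pos hx
  have h1t : 0 < 1 + t := by linarith
  unfold Phi ellipticK
  rw [← hts, ← intervalIntegral.integral_div]
  refine intervalIntegral.integral_congr ?_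
  intro ζ hζ
  rw [Set.uIcc_of_le zero_le_one] at hζ
  obtain ⟨hζ0, hζ1⟩ := hζ
  have hζ2 : ζ ^ 2 ≤ 1 := by nlinarith
  have hu1 : (1 - t) / (1 + t) ≤ 1 := by
    rw [div_le_one h1t]; linarith
  have hu : (1 - t) / (1 + t) * (1 + t) = 1 - t := div_mul_cancel₀ _ (ne_of_gt h1t)
  have hA : 0 ≤ (1 - ζ ^ 2) * (1 - (1 - t) / (1 + t) * ζ ^ 2) := by
    have h2 : (1 - t) / (1 + t) * ζ ^ 2 ≤ 1 * ζ ^ 2 :=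
      mul_le_mul_of_nonneg_right hu1 (sq_nonneg ζ)
    have : (1 - t) / (1 + t) * ζ ^ 2 ≤ 1 := by nlinarith
    nlinarith
  have hP : (1 - ζ ^ 2) * (1 - (1 - t) / (1 + t) * ζ ^ 2) * (1 + t) = inr x ζ := by
    unfold inr
    rw [← hts]
    field_simp
    ring_nf
  show 1 / Real.sqrt ((1 - ζ ^ 2) * (1 - (1 - t) / (1 + t) * ζ ^ 2)) / Real.sqrt (1 + t) = gg x ζ
  rw [div_div, ← Real.sqrt_mul hA, hP]
  rfl

lemma Phi_pos {x : ℝ} (hx : x < 1) : 0 < Phi x := by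
  rw [Phi_eq hx]
  exact intervalIntegral.intervalIntegral_pos_of_pos_on (intInt_gg hx)
    (fun ζ hζ => gg_pos hx hζ) zero_lt_one

end PhiAux

namespace PhiAux
open MeasureTheory Set intervalIntegral

/-- Derivative of the integrand in `x`. -/
noncomputable def gg' (x ζ : ℝ) : ℝ :=
  ((1 - ζ ^ 2) * (1 + ζ ^ 2)) /
    (4 * Real.sqrt (1 - x) * (Real.sqrt (inr x ζ) * inr x ζ))

lemma gg'_nonneg {x ζ : ℝ} (hζ : ζ ∈ Set.Ioo (0:ℝ) 1) (hx : x < 1) : 0 ≤ gg' x ζ := by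
  unfold gg'
  have h1 : (0:ℝ) ≤ 1 - ζ ^ 2 := by nlinarith [hζ.1, hζ.2]
  have h2 : (0:ℝ) ≤ 1 + ζ ^ 2 := by positivity
  have hI : 0 < inr x ζ := inr_pos hx hζ
  have ht : 0 < Real.sqrt (1 - x) := sqrt1x_pos hx
  have hs : 0 < Real.sqrt (inr x ζ) := Real.sqrt_pos.2 hI
  exact div_nonneg (mul_nonneg h1 h2) (by positivity)

lemma gg'_meas (x : ℝ) : Measurable (fun ζ => gg' x ζ) := by
  have h1 : Continuous fun ζ : ℝ => (1 - ζ ^ 2) * (1 + ζ ^ 2) := by fun_prop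
  have h2 : Continuous fun ζ : ℝ =>
      4 * Real.sqrt (1 - x) * (Real.sqrt (inr x ζ) * inr x ζ) := by
    unfold inr; fun_prop
  exact h1.measurable.div h2.measurable

lemma hasDerivAt_gg {ζ x : ℝ} (hζ : ζ ∈ Set.Ioo (0:ℝ) 1) (hx : x < 1) :
    HasDerivAt (fun y => gg y ζ) (gg' x ζ) x := by
  have ht : 0 < Real.sqrt (1 - x) := sqrt1x_pos hx
  have hI : 0 < inr x ζ := inr_pos hx hζ
  have h1 : HasDerivAt (fun y : ℝ => 1 - y) (-1) x := by
    simpa using (hasDerivAt_id x).const_sub 1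
  have h2 : HasDerivAt (fun y => Real.sqrt (1 - y)) (-1 / (2 * Real.sqrt (1 - x))) x :=
    h1.sqrt (ne_of_gt (by linarith : (0:ℝ) < 1 - x))
  have h3 : HasDerivAt (fun y => inr y ζ)
      ((1 - ζ ^ 2) * ((1 + ζ ^ 2) * (-1 / (2 * Real.sqrt (1 - x))))) x := by
    unfold inr
    exact ((h2.const_mul (1 + ζ ^ 2)).const_add (1 - ζ ^ 2)).const_mul (1 - ζ ^ 2)
  have h4 := h3.sqrt (ne_of_gt hI)
  have h5 := h4.inv (ne_of_gt (Real.sqrt_pos.2 hI))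
  have heq : (fun y => gg y ζ) = fun y => (Real.sqrt (inr y ζ))⁻¹ := by
    funext y; rw [gg, one_div]
  rw [heq]
  refine h5.congr_deriv ?_
  symm
  have hs2 : Real.sqrt (inr x ζ) ^ 2 = inr x ζ := Real.sq_sqrt hI.le
  unfold gg'
  rw [hs2]
  have hsne : Real.sqrt (inr x ζ) ≠ 0 := ne_of_gt (Real.sqrt_pos.2 hI)
  field_simp
  ring

end PhiAux

namespace PhiAux
open MeasureTheory Set intervalIntegral

lemma ae_ne_one : ∀ᵐ ζ : ℝ, ζ ≠ (1:ℝ) := by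
  rw [MeasureTheory.ae_iff]
  simp only [not_not]
  rw [show {ζ : ℝ | ζ = 1} = {(1:ℝ)} from Set.setOf_eq_eq_singleton]
  exact Real.volume_singleton

lemma hasDerivAt_Phi {x₀ : ℝ} (hx₀ : x₀ < 1) :
    HasDerivAt Phi (∫ ζ in (0:ℝ)..1, gg' x₀ ζ) x₀ := by
  set ε := (1 - x₀) / 2 with hε
  have hε0 : 0 < ε := by rw [hε]; linarith
  have hball : ∀ x ∈ Metric.ball x₀ ε, x < 1 ∧ ε ≤ 1 - x := by
    intro x hx
    rw [Metric.mem_ball, Real.dist_eq, abs_lt] at hx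
    constructor
    · linarith [hx.2]
    · linarith [hx.2]
  set Cb := 1 / (2 * ε * Real.sqrt (Real.sqrt ε)) with hCb
  have key := intervalIntegral.hasDerivAt_integral_of_dominated_loc_of_deriv_le
    (F := fun x ζ => gg x ζ) (F' := fun x ζ => gg' x ζ) (x₀ := x₀) (μ := volume)
    (a := 0) (b := 1) (bound := fun ζ => Cb / Real.sqrt (1 - ζ)) (Metric.ball_mem_nhds x₀ hε0)
    (Filter.Eventually.of_forall fun x => ((gg_meas x).aestronglyMeasurable).restrict)
    (intInt_gg hx₀)
    (((gg'_meas x₀).aestronglyMeasurable).restrict)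
    ?_ ?_ ?_
  · obtain ⟨-, hD⟩ := key
    have hEq : Phi =ᶠ[nhds x₀] fun x => ∫ ζ in (0:ℝ)..1, gg x ζ := by
      filter_upwards [Iio_mem_nhds hx₀] with x hx using Phi_eq hx
    exact hD.congr_of_eventuallyEq hEq
  · -- the bound
    filter_upwards [ae_ne_one] with ζ hζ1
    intro hζI x hx
    rw [Set.uIoc_of_le zero_le_one] at hζI
    have hζ : ζ ∈ Set.Ioo (0:ℝ) 1 := ⟨hζI.1, lt_of_le_of_ne hζI.2 hζ1⟩
    obtain ⟨hx1, hxε⟩ := hball x hx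
    have hc : 0 < 1 - ζ ^ 2 := by nlinarith [hζ.1, hζ.2]
    have hd2 : (1 + ζ ^ 2) ≤ 2 := by nlinarith [hζ.1, hζ.2]
    have ht : 0 < Real.sqrt (1 - x) := sqrt1x_pos hx1
    have hI : 0 < inr x ζ := inr_pos hx1 hζ
    have hsI : 0 < Real.sqrt (inr x ζ) := Real.sqrt_pos.2 hI
    have h1ζ : (0:ℝ) < 1 - ζ := by linarith [hζ.2]
    have e3 : Real.sqrt ε ≤ Real.sqrt (1 - x) := Real.sqrt_le_sqrt hxε
    have e4 : Real.sqrt (Real.sqrt ε) ≤ Real.sqrt (Real.sqrt (1 - x)) := Real.sqrt_le_sqrt e3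
    have e5 : ε ≤ Real.sqrt (1 - x) * Real.sqrt (1 - x) := by
      have h := Real.mul_self_sqrt hε0.le
      nlinarith [Real.sqrt_nonneg ε]
    have e1 : Real.sqrt (1 - ζ) ≤ Real.sqrt (1 - ζ ^ 2) :=
      Real.sqrt_le_sqrt (by nlinarith [hζ.1, hζ.2])
    have hIct : (1 - ζ ^ 2) * Real.sqrt (1 - x) ≤ inr x ζ := by
      unfold inr
      nlinarith [mul_nonneg hc.le (mul_nonneg (sq_nonneg ζ) ht.le), mul_nonneg hc.le hc.le]
    have hsqI : Real.sqrt (1 - ζ ^ 2) * Real.sqrt (Real.sqrt (1 - x)) ≤ Real.sqrt (inr x ζ) := by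
      rw [← Real.sqrt_mul hc.le]
      exact Real.sqrt_le_sqrt hIct
    rw [Real.norm_of_nonneg (gg'_nonneg hζ hx1)]
    unfold gg'
    rw [hCb, div_div]
    rw [div_le_div_iff₀ (by positivity) (by positivity)]
    have sζ := Real.sqrt_nonneg (1 - ζ)
    have sc := Real.sqrt_nonneg (1 - ζ ^ 2)
    have st := Real.sqrt_nonneg (Real.sqrt (1 - x))
    have sε := Real.sqrt_nonneg (Real.sqrt ε)
    calc (1 - ζ ^ 2) * (1 + ζ ^ 2) * (2 * ε * Real.sqrt (Real.sqrt ε) * Real.sqrt (1 - ζ))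
        ≤ (1 - ζ ^ 2) * 2 * (2 * ε * Real.sqrt (Real.sqrt ε) * Real.sqrt (1 - ζ ^ 2)) := by
          gcongr
      _ = 4 * ε * Real.sqrt (Real.sqrt ε) *
            ((1 - ζ ^ 2) * Real.sqrt (1 - ζ ^ 2)) := by ring
      _ ≤ 4 * (Real.sqrt (1 - x) * Real.sqrt (1 - x)) * Real.sqrt (Real.sqrt (1 - x)) *
            ((1 - ζ ^ 2) * Real.sqrt (1 - ζ ^ 2)) := by
          gcongr
      _ = 4 * Real.sqrt (1 - x) *
            ((Real.sqrt (1 - ζ ^ 2) * Real.sqrt (Real.sqrt (1 - x))) *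
              ((1 - ζ ^ 2) * Real.sqrt (1 - x))) := by ring
      _ ≤ 4 * Real.sqrt (1 - x) * (Real.sqrt (inr x ζ) * inr x ζ) := by
          have := mul_le_mul hsqI hIct (mul_nonneg hc.le ht.le) hsI.le
          gcongr
      _ = 1 * (4 * Real.sqrt (1 - x) * (Real.sqrt (inr x ζ) * inr x ζ)) := by ring
  · -- bound integrable
    refine intInt_of_bound (C := Cb) ?_ ?_
    · have hcont : Continuous fun ζ : ℝ => Real.sqrt (1 - ζ) := by fun_prop
      exact measurable_const.div hcont.measurable
    · intro ζ hζ
      have : (0:ℝ) ≤ Cb / Real.sqrt (1 - ζ) := by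
        apply div_nonneg _ (Real.sqrt_nonneg _)
        rw [hCb]; positivity
      rw [abs_of_nonneg this]
  · -- differentiability a.e.
    filter_upwards [ae_ne_one] with ζ hζ1
    intro hζI x hx
    rw [Set.uIoc_of_le zero_le_one] at hζI
    have hζ : ζ ∈ Set.Ioo (0:ℝ) 1 := ⟨hζI.1, lt_of_le_of_ne hζI.2 hζ1⟩
    exact hasDerivAt_gg hζ (hball x hx).1

end PhiAux

namespace PhiAux
open MeasureTheory Set intervalIntegral

lemma sqrt_rpow_comm {A : ℝ} (hA : 0 ≤ A) (a : ℝ) :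
    Real.sqrt (A ^ a) = (Real.sqrt A) ^ a := by
  rw [Real.sqrt_eq_rpow, Real.sqrt_eq_rpow, ← Real.rpow_mul hA, ← Real.rpow_mul hA, mul_comm]

lemma gg_strict {ζ x y a b : ℝ} (hζ : ζ ∈ Set.Ioo (0:ℝ) 1) (hx : x < 1) (hy : y < 1)
    (hxy : x ≠ y) (ha : 0 < a) (hb : 0 < b) (hab : a + b = 1) :
    gg (a * x + b * y) ζ < (gg x ζ) ^ a * (gg y ζ) ^ b := by
  have hp : a * x + b * y < 1 := by nlinarith
  have hc : 0 < 1 - ζ ^ 2 := by nlinarith [hζ.1, hζ.2]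
  have hd : (0:ℝ) < 1 + ζ ^ 2 := by positivity
  set s := Real.sqrt (1 - x) with hs
  set r := Real.sqrt (1 - y) with hr
  set m := Real.sqrt (1 - (a * x + b * y)) with hm
  have hspos : 0 < s := sqrt1x_pos hx
  have hrpos : 0 < r := sqrt1x_pos hy
  have hmpos : 0 < m := sqrt1x_pos hp
  have hs2 : s ^ 2 = 1 - x := Real.sq_sqrt (by linarith)
  have hr2 : r ^ 2 = 1 - y := Real.sq_sqrt (by linarith)
  have hm2 : m ^ 2 = a * s ^ 2 + b * r ^ 2 := by
    rw [hs2, hr2, Real.sq_sqrt (by linarith : (0:ℝ) ≤ 1 - (a * x + b * y))]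
    nlinarith [hab]
  have hsr : s ≠ r := by
    intro h
    apply hxy
    have : 1 - x = 1 - y := by rw [← hs2, ← hr2, h]
    linarith
  -- key1 : a*s + b*r < m
  have key1 : a * s + b * r < m := by
    have h1 : (a * s + b * r) ^ 2 < m ^ 2 := by
      rw [hm2]
      have hsq : 0 < (s - r) ^ 2 := by
        rcases (sub_ne_zero.2 hsr).lt_or_gt with h | h <;> nlinarith
      have hid : a * s ^ 2 + b * r ^ 2 - (a * s + b * r) ^ 2 = a * b * (s - r) ^ 2 := by
        linear_combination (-(a * s ^ 2 + b * r ^ 2)) * hab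
      nlinarith [mul_pos (mul_pos ha hb) hsq]
    exact lt_of_pow_lt_pow_left₀ 2 hmpos.le h1
  -- key2 : weighted AM-GM
  have key2 : ((1 - ζ ^ 2) + (1 + ζ ^ 2) * s) ^ a * ((1 - ζ ^ 2) + (1 + ζ ^ 2) * r) ^ b
      ≤ (1 - ζ ^ 2) + (1 + ζ ^ 2) * (a * s + b * r) := by
    have h1 : 0 ≤ (1 - ζ ^ 2) + (1 + ζ ^ 2) * s := by nlinarith [mul_pos hd hspos]
    have h2 : 0 ≤ (1 - ζ ^ 2) + (1 + ζ ^ 2) * r := by nlinarith [mul_pos hd hrpos]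
    have := Real.geom_mean_le_arith_mean2_weighted ha.le hb.le h1 h2 hab
    calc ((1 - ζ ^ 2) + (1 + ζ ^ 2) * s) ^ a * ((1 - ζ ^ 2) + (1 + ζ ^ 2) * r) ^ b
        ≤ a * ((1 - ζ ^ 2) + (1 + ζ ^ 2) * s) + b * ((1 - ζ ^ 2) + (1 + ζ ^ 2) * r) := this
      _ = (1 - ζ ^ 2) + (1 + ζ ^ 2) * (a * s + b * r) := by
          linear_combination (1 - ζ ^ 2) * hab
  -- key4 : products of inner expressions
  have hIx : 0 < inr x ζ := inr_pos hx hζ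
  have hIy : 0 < inr y ζ := inr_pos hy hζ
  have hIp : 0 < inr (a * x + b * y) ζ := inr_pos hp hζ
  have key4 : (inr x ζ) ^ a * (inr y ζ) ^ b < inr (a * x + b * y) ζ := by
    have hfx : 0 < (1 - ζ ^ 2) + (1 + ζ ^ 2) * s := by nlinarith [mul_pos hd hspos]
    have hfy : 0 < (1 - ζ ^ 2) + (1 + ζ ^ 2) * r := by nlinarith [mul_pos hd hrpos]
    have step1 : inr (a * x + b * y) ζ = (1 - ζ ^ 2) * ((1 - ζ ^ 2) + (1 + ζ ^ 2) * m) := rfl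
    have step2 : (1 - ζ ^ 2) * ((1 - ζ ^ 2) + (1 + ζ ^ 2) * (a * s + b * r))
        < (1 - ζ ^ 2) * ((1 - ζ ^ 2) + (1 + ζ ^ 2) * m) := by
      apply mul_lt_mul_of_pos_left _ hc
      have := mul_lt_mul_of_pos_left key1 hd
      linarith
    have step3 : (inr x ζ) ^ a * (inr y ζ) ^ b
        ≤ (1 - ζ ^ 2) * ((1 - ζ ^ 2) + (1 + ζ ^ 2) * (a * s + b * r)) := by
      have hcab : (1 - ζ ^ 2) = (1 - ζ ^ 2) ^ a * (1 - ζ ^ 2) ^ b := by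
        rw [← Real.rpow_add hc, hab, Real.rpow_one]
      have hx' : inr x ζ = (1 - ζ ^ 2) * ((1 - ζ ^ 2) + (1 + ζ ^ 2) * s) := rfl
      have hy' : inr y ζ = (1 - ζ ^ 2) * ((1 - ζ ^ 2) + (1 + ζ ^ 2) * r) := rfl
      rw [hx', hy', Real.mul_rpow hc.le hfx.le, Real.mul_rpow hc.le hfy.le]
      calc (1 - ζ ^ 2) ^ a * ((1 - ζ ^ 2) + (1 + ζ ^ 2) * s) ^ a *
            ((1 - ζ ^ 2) ^ b * ((1 - ζ ^ 2) + (1 + ζ ^ 2) * r) ^ b)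
          = ((1 - ζ ^ 2) ^ a * (1 - ζ ^ 2) ^ b) *
            (((1 - ζ ^ 2) + (1 + ζ ^ 2) * s) ^ a * ((1 - ζ ^ 2) + (1 + ζ ^ 2) * r) ^ b) := by
            ring
        _ ≤ ((1 - ζ ^ 2) ^ a * (1 - ζ ^ 2) ^ b) *
            ((1 - ζ ^ 2) + (1 + ζ ^ 2) * (a * s + b * r)) := by
            exact mul_le_mul_of_nonneg_left key2
              (mul_nonneg (Real.rpow_nonneg hc.le a) (Real.rpow_nonneg hc.le b))
        _ = (1 - ζ ^ 2) * ((1 - ζ ^ 2) + (1 + ζ ^ 2) * (a * s + b * r)) := by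
            rw [← hcab]
    calc (inr x ζ) ^ a * (inr y ζ) ^ b
        ≤ (1 - ζ ^ 2) * ((1 - ζ ^ 2) + (1 + ζ ^ 2) * (a * s + b * r)) := step3
      _ < (1 - ζ ^ 2) * ((1 - ζ ^ 2) + (1 + ζ ^ 2) * m) := step2
      _ = inr (a * x + b * y) ζ := step1.symm
  -- conclude
  have hsplit : Real.sqrt ((inr x ζ) ^ a * (inr y ζ) ^ b)
      = (Real.sqrt (inr x ζ)) ^ a * (Real.sqrt (inr y ζ)) ^ b := by
    rw [Real.sqrt_mul (Real.rpow_nonneg hIx.le a), sqrt_rpow_comm hIx.le, sqrt_rpow_comm hIy.le]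
  have hlt : (Real.sqrt (inr x ζ)) ^ a * (Real.sqrt (inr y ζ)) ^ b
      < Real.sqrt (inr (a * x + b * y) ζ) := by
    rw [← hsplit]
    exact Real.sqrt_lt_sqrt (by positivity) key4
  have hden : 0 < (Real.sqrt (inr x ζ)) ^ a * (Real.sqrt (inr y ζ)) ^ b := by
    have h1 : 0 < Real.sqrt (inr x ζ) := Real.sqrt_pos.2 hIx
    have h2 : 0 < Real.sqrt (inr y ζ) := Real.sqrt_pos.2 hIy
    positivity
  unfold gg
  rw [Real.div_rpow zero_le_one (Real.sqrt_nonneg _), Real.div_rpow zero_le_one (Real.sqrt_nonneg _),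
    Real.one_rpow, Real.one_rpow, div_mul_div_comm, one_mul]
  exact one_div_lt_one_div_of_lt hden hlt

end PhiAux

namespace PhiAux
open MeasureTheory Set intervalIntegral

lemma intInt_prod {x y a b : ℝ} (hx : x < 1) (hy : y < 1) (ha : 0 < a) (hb : 0 < b)
    (hab : a + b = 1) :
    IntervalIntegrable (fun ζ => (gg x ζ) ^ a * (gg y ζ) ^ b) MeasureTheory.volume 0 1 := by
  refine intInt_of_bound ?_
    (C := (1 / Real.sqrt (Real.sqrt (1 - x))) ^ a * (1 / Real.sqrt (Real.sqrt (1 - y))) ^ b) ?_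
  · exact ((Real.continuous_rpow_const ha.le).measurable.comp (gg_meas x)).mul
      ((Real.continuous_rpow_const hb.le).measurable.comp (gg_meas y))
  · intro ζ hζ
    have h1ζ : (0:ℝ) < 1 - ζ := by linarith [hζ.2]
    have hsζ : 0 < Real.sqrt (1 - ζ) := Real.sqrt_pos.2 h1ζ
    have hCx : (0:ℝ) ≤ 1 / Real.sqrt (Real.sqrt (1 - x)) := by positivity
    have hCy : (0:ℝ) ≤ 1 / Real.sqrt (Real.sqrt (1 - y)) := by positivity
    rw [abs_of_nonneg (mul_nonneg (Real.rpow_nonneg (gg_nonneg x ζ) a)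
      (Real.rpow_nonneg (gg_nonneg y ζ) b))]
    have e1 : (gg x ζ) ^ a ≤ (1 / Real.sqrt (Real.sqrt (1 - x)) / Real.sqrt (1 - ζ)) ^ a :=
      Real.rpow_le_rpow (gg_nonneg x ζ) (gg_le hx hζ) ha.le
    have e2 : (gg y ζ) ^ b ≤ (1 / Real.sqrt (Real.sqrt (1 - y)) / Real.sqrt (1 - ζ)) ^ b :=
      Real.rpow_le_rpow (gg_nonneg y ζ) (gg_le hy hζ) hb.le
    calc (gg x ζ) ^ a * (gg y ζ) ^ b
        ≤ (1 / Real.sqrt (Real.sqrt (1 - x)) / Real.sqrt (1 - ζ)) ^ a *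
          (1 / Real.sqrt (Real.sqrt (1 - y)) / Real.sqrt (1 - ζ)) ^ b := by
          exact mul_le_mul e1 e2 (Real.rpow_nonneg (gg_nonneg y ζ) b) (by positivity)
      _ = (1 / Real.sqrt (Real.sqrt (1 - x))) ^ a * (1 / Real.sqrt (Real.sqrt (1 - y))) ^ b /
            Real.sqrt (1 - ζ) := by
          rw [Real.div_rpow hCx hsζ.le, Real.div_rpow hCy hsζ.le]
          rw [div_mul_div_comm, ← Real.rpow_add hsζ, hab, Real.rpow_one]

lemma holder_step {x y a b : ℝ} (hx : x < 1) (hy : y < 1) (ha : 0 < a) (hb : 0 < b)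
    (hab : a + b = 1) :
    ∫ ζ in (0:ℝ)..1, (gg x ζ) ^ a * (gg y ζ) ^ b ≤
      (∫ ζ in (0:ℝ)..1, gg x ζ) ^ a * (∫ ζ in (0:ℝ)..1, gg y ζ) ^ b := by
  have ha1 : a < 1 := by linarith
  have hb1 : b < 1 := by linarith
  rw [intervalIntegral.integral_of_le zero_le_one, intervalIntegral.integral_of_le zero_le_one,
    intervalIntegral.integral_of_le zero_le_one]
  have hconj : Real.HolderConjugate a⁻¹ b⁻¹ := by
    rw [Real.holderConjugate_iff]
    constructor
    · exact (one_lt_inv₀ ha).2 ha1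
    · rw [inv_inv, inv_inv]; exact hab

  have hGx : Integrable (gg x) (volume.restrict (Set.Ioc (0:ℝ) 1)) := by
    have := intInt_gg hx
    rwa [intervalIntegrable_iff_integrableOn_Ioc_of_le zero_le_one] at this
  have hGy : Integrable (gg y) (volume.restrict (Set.Ioc (0:ℝ) 1)) := by
    have := intInt_gg hy
    rwa [intervalIntegrable_iff_integrableOn_Ioc_of_le zero_le_one] at this
  have memf : MemLp (fun ζ => (gg x ζ) ^ a) (ENNReal.ofReal a⁻¹)
      (volume.restrict (Set.Ioc (0:ℝ) 1)) := by
    have h0 : MemLp (gg x) 1 (volume.restrict (Set.Ioc (0:ℝ) 1)) :=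
      (memLp_one_iff_integrable).2 hGx
    have h1 := (memLp_norm_rpow_iff (q := ENNReal.ofReal a)
      h0.aestronglyMeasurable (by simp [ENNReal.ofReal_eq_zero, not_le, ha])
      ENNReal.ofReal_ne_top).2 h0
    have h2 : (fun ζ => ‖gg x ζ‖ ^ (ENNReal.ofReal a).toReal) = fun ζ => (gg x ζ) ^ a := by
      funext ζ
      rw [Real.norm_of_nonneg (gg_nonneg x ζ), ENNReal.toReal_ofReal ha.le]
    rw [h2] at h1
    have h3 : (1 : ENNReal) / ENNReal.ofReal a = ENNReal.ofReal a⁻¹ := by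
      rw [one_div, ← ENNReal.ofReal_inv_of_pos ha]
    rwa [h3] at h1
  have memg : MemLp (fun ζ => (gg y ζ) ^ b) (ENNReal.ofReal b⁻¹)
      (volume.restrict (Set.Ioc (0:ℝ) 1)) := by
    have h0 : MemLp (gg y) 1 (volume.restrict (Set.Ioc (0:ℝ) 1)) :=
      (memLp_one_iff_integrable).2 hGy
    have h1 := (memLp_norm_rpow_iff (q := ENNReal.ofReal b)
      h0.aestronglyMeasurable (by simp [ENNReal.ofReal_eq_zero, not_le, hb])
      ENNReal.ofReal_ne_top).2 h0
    have h2 : (fun ζ => ‖gg y ζ‖ ^ (ENNReal.ofReal b).toReal) = fun ζ => (gg y ζ) ^ b := by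
      funext ζ
      rw [Real.norm_of_nonneg (gg_nonneg y ζ), ENNReal.toReal_ofReal hb.le]
    rw [h2] at h1
    have h3 : (1 : ENNReal) / ENNReal.ofReal b = ENNReal.ofReal b⁻¹ := by
      rw [one_div, ← ENNReal.ofReal_inv_of_pos hb]
    rwa [h3] at h1
  have h := MeasureTheory.integral_mul_le_Lp_mul_Lq_of_nonneg hconj
    (Filter.Eventually.of_forall fun ζ => Real.rpow_nonneg (gg_nonneg x ζ) a)
    (Filter.Eventually.of_forall fun ζ => Real.rpow_nonneg (gg_nonneg y ζ) b)
    memf memg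
  have e1 : ∀ ζ : ℝ, ((gg x ζ) ^ a) ^ a⁻¹ = gg x ζ := fun ζ => by
    rw [← Real.rpow_mul (gg_nonneg x ζ), mul_inv_cancel₀ ha.ne', Real.rpow_one]
  have e2 : ∀ ζ : ℝ, ((gg y ζ) ^ b) ^ b⁻¹ = gg y ζ := fun ζ => by
    rw [← Real.rpow_mul (gg_nonneg y ζ), mul_inv_cancel₀ hb.ne', Real.rpow_one]
  simp only [e1, e2, one_div, inv_inv] at h
  exact h

end PhiAux

namespace PhiAux
open MeasureTheory Set intervalIntegral

lemma Phi_strict {x y a b : ℝ} (hx : x < 1) (hy : y < 1) (hxy : x ≠ y)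
    (ha : 0 < a) (hb : 0 < b) (hab : a + b = 1) :
    Phi (a * x + b * y) < (Phi x) ^ a * (Phi y) ^ b := by
  have hp : a * x + b * y < 1 := by nlinarith
  have step1 : Phi (a * x + b * y) < ∫ ζ in (0:ℝ)..1, (gg x ζ) ^ a * (gg y ζ) ^ b := by
    rw [Phi_eq hp]
    have hsub := (intInt_prod hx hy ha hb hab).sub (intInt_gg hp)
    have hpos := intervalIntegral.intervalIntegral_pos_of_pos_on hsub
      (fun ζ hζ => sub_pos.2 (gg_strict hζ hx hy hxy ha hb hab)) zero_lt_one
    rw [intervalIntegral.integral_sub (intInt_prod hx hy ha hb hab) (intInt_gg hp)] at hpos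
    linarith
  calc Phi (a * x + b * y) < ∫ ζ in (0:ℝ)..1, (gg x ζ) ^ a * (gg y ζ) ^ b := step1
    _ ≤ (∫ ζ in (0:ℝ)..1, gg x ζ) ^ a * (∫ ζ in (0:ℝ)..1, gg y ζ) ^ b :=
        holder_step hx hy ha hb hab
    _ = (Phi x) ^ a * (Phi y) ^ b := by rw [← Phi_eq hx, ← Phi_eq hy]

lemma strictConvex_logPhi : StrictConvexOn ℝ (Set.Iio (1:ℝ)) (fun x => Real.log (Phi x)) := by
  refine ⟨convex_Iio 1, ?_⟩
  intro x hx y hy hxy a b ha hb hab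
  simp only [smul_eq_mul]
  have hx1 : x < 1 := hx
  have hy1 : y < 1 := hy
  have hp : a * x + b * y < 1 := by nlinarith
  have key := Phi_strict hx1 hy1 hxy ha hb hab
  have hPx := Phi_pos hx1
  have hPy := Phi_pos hy1
  calc Real.log (Phi (a * x + b * y)) < Real.log ((Phi x) ^ a * (Phi y) ^ b) :=
        Real.log_lt_log (Phi_pos hp) key
    _ = a * Real.log (Phi x) + b * Real.log (Phi y) := by
        rw [Real.log_mul (ne_of_gt (Real.rpow_pos_of_pos hPx a))
          (ne_of_gt (Real.rpow_pos_of_pos hPy b)),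
          Real.log_rpow hPx, Real.log_rpow hPy]

lemma hasDerivAt_logPhi {x : ℝ} (hx : x < 1) :
    HasDerivAt (fun z => Real.log (Phi z)) (deriv Phi x / Phi x) x := by
  have h := hasDerivAt_Phi hx
  have hd : deriv Phi x = ∫ ζ in (0:ℝ)..1, gg' x ζ := h.deriv
  rw [hd]
  exact h.log (ne_of_gt (Phi_pos hx))

end PhiAux

/-- The logarithmic derivative `Φ'/Φ` is strictly monotone increasing on `(-∞, 1)`. -/
theorem strictMonoOn_logDeriv_Phi :
    StrictMonoOn (fun x : ℝ => deriv Phi x / Phi x) (Set.Iio 1) := by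
  have hmono := PhiAux.strictConvex_logPhi.strictMonoOn_deriv
    (fun z hz => (PhiAux.hasDerivAt_logPhi hz).differentiableAt)
  intro x hx y hy hxy
  have := hmono hx hy hxy
  rwa [(PhiAux.hasDerivAt_logPhi hx).deriv, (PhiAux.hasDerivAt_logPhi hy).deriv] at this
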